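/- Let p ≥ 1 be an integer, let f_ref, f_k, f_{k+1} be real numbers, let G ≥ 0 be a real number (representing ‖g(x_{k+1})‖), and let κ > 0, ζ > 0. Suppose that G ≥ κ(f_{k+1} − f_ref) ≥ 0 but G² < κ(f_{k+1} − f_ref) (i.e., x_{k+1} lies in subregion R_1^1), and that f_k − f_{k+1} ≥ G^{(p+1)/p}/ζ. Then κ(f_{k+1} − f_ref) < 1; moreover, if additionally f_k − f_ref ≥ ζ^p/κ^{p+1}, then the objective gap decreases at a superlinear rate: f_{k+1} − f_ref ≤ (ζ^p/(κ^{p+1}(f_k − f_ref)))^{1/(p+1)} · (f_k − f_ref). -/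

import Mathlib

/-- Theorem 6.1(b), first case: `κ(f_{k+1} − f_ref) < 1`, and superlinear decrease of the
objective gap when `x_{k+1} ∈ R_1^1` and `f_k − f_ref ≥ ζ^p/κ^{p+1}`. -/
theorem rc_regionp_sub1_superlinear
    (p : ℕ) (hp : 1 ≤ p)
    (f_ref f_k f_k1 G κ ζ : ℝ)
    (hG : 0 ≤ G) (hκ : 0 < κ) (hζ : 0 < ζ)
    (h1 : G ≥ κ * (f_k1 - f_ref)) (h2 : κ * (f_k1 - f_ref) ≥ 0)
    (h3 : G ^ 2 < κ * (f_k1 - f_ref))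
    (hdec : f_k - f_k1 ≥ G ^ (((p : ℝ) + 1) / p) / ζ) :
    κ * (f_k1 - f_ref) < 1 ∧
      (f_k - f_ref ≥ ζ ^ p / κ ^ (p + 1) →
        f_k1 - f_ref ≤
          (ζ ^ p / (κ ^ (p + 1) * (f_k - f_ref))) ^ ((1 : ℝ) / ((p : ℝ) + 1)) *
            (f_k - f_ref)) := by
  have hp0 : (0 : ℝ) < (p : ℝ) := by exact_mod_cast Nat.lt_of_lt_of_le Nat.zero_lt_one hp
  have hp1 : (0 : ℝ) < (p : ℝ) + 1 := by linarith
  have hGlt1 : G < 1 := by nlinarith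
  have hAlt1 : κ * (f_k1 - f_ref) < 1 := lt_of_le_of_lt h1 hGlt1
  refine ⟨hAlt1, fun hD => ?_⟩
  have hζp : (0 : ℝ) < ζ ^ p / κ ^ (p + 1) := by positivity
  have hDpos : 0 < f_k - f_ref := lt_of_lt_of_le hζp hD
  have hfk1 : 0 ≤ f_k1 - f_ref := by nlinarith
  set e1 : ℝ := ((p : ℝ) + 1) / p with he1
  set e2 : ℝ := (p : ℝ) / ((p : ℝ) + 1) with he2
  have he2nn : 0 ≤ e2 := by positivity
  have hAe : (κ * (f_k1 - f_ref)) ^ e1 ≤ ζ * (f_k - f_ref) := by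
    have h4 : (κ * (f_k1 - f_ref)) ^ e1 ≤ G ^ e1 :=
      Real.rpow_le_rpow h2 h1 (by positivity)
    have h5 : G ^ e1 ≤ ζ * (f_k - f_k1) := by
      have := (div_le_iff₀ hζ).mp hdec
      linarith [this]
    have h6 : f_k - f_k1 ≤ f_k - f_ref := by linarith
    nlinarith [h4, h5, mul_le_mul_of_nonneg_left h6 hζ.le]
  have hkey : κ * (f_k1 - f_ref) ≤ (ζ * (f_k - f_ref)) ^ e2 := by
    have := Real.rpow_le_rpow (Real.rpow_nonneg h2 e1) hAe he2nn
    rwa [← Real.rpow_mul h2,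
      show e1 * e2 = (1 : ℝ) by rw [he1, he2]; field_simp,
      Real.rpow_one] at this
  have hT : (ζ ^ p / (κ ^ (p + 1) * (f_k - f_ref))) ^ ((1 : ℝ) / ((p : ℝ) + 1)) *
      (f_k - f_ref) = (ζ * (f_k - f_ref)) ^ e2 / κ := by
    rw [Real.mul_rpow hζ.le hDpos.le]
    rw [Real.div_rpow (by positivity) (by positivity),
      Real.mul_rpow (by positivity) hDpos.le,
      ← Real.rpow_natCast ζ p, ← Real.rpow_natCast κ (p + 1),
      ← Real.rpow_mul hζ.le, ← Real.rpow_mul hκ.le]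
    push_cast
    rw [show ((p : ℝ)) * (1 / ((p : ℝ) + 1)) = e2 by rw [he2]; ring,
      show ((p : ℝ) + 1) * (1 / ((p : ℝ) + 1)) = 1 by field_simp,
      Real.rpow_one]
    have hDsplit : (f_k - f_ref) ^ ((1 : ℝ) / ((p : ℝ) + 1)) * (f_k - f_ref) ^ e2
        = f_k - f_ref := by
      rw [← Real.rpow_add hDpos,
        show (1 : ℝ) / ((p : ℝ) + 1) + e2 = 1 by rw [he2]; field_simp; ring,
        Real.rpow_one]
    field_simp
    linear_combination (-1 : ℝ) * hDsplit
  rw [hT]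
  rw [le_div_iff₀ hκ]
  linarith [hkey]
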